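/- arXiv:1311.4044 — 8 statements merged into one kernel-verified Lean document; each statement's English description precedes it below -/
import Mathlib

section
/- Let G, H, K be finite groups acting on finite sets X, Y, Z, and let (α,θ_α): X/G → Z/K and (β,θ_β): Y/H → Z/K be 1-cells. Set F = {(x,y,k) ∈ X×Y×K | β(y) = k•α(x)}. Then the formula (g,h)•(x,y,k) := (g•x, h•y, θ_{β,y}(h)·k·θ_{α,x}(g)⁻¹) defines an action of the group G×H on F (the formula maps F into F, the identity of G×H acts trivially, and the action is compatible with multiplication in G×H). Moreover the projections ℘_X(x,y,k) = x with constant acting family (g,h) ↦ g, and ℘_Y(x,y,k) = y with constant acting family (g,h) ↦ h, are 1-cells F/(G×H) → X/G and F/(G×H) → Y/H respectively, and the map κ(x,y,k) = k satisfies β(℘_Y(f)) = κ(f)•α(℘_X(f)) and κ((g,h)•f)·θ_{α,℘_X(f)}(g)·κ(f)⁻¹ = θ_{β,℘_Y(f)}(h) for all f ∈ F and (g,h) ∈ G×H. -/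
/-- The construction of the 2-fibered product in 𝕊: the set
F = {(x,y,k) | β(y) = k•α(x)} carries a G×H-action via
(g,h)•(x,y,k) = (g•x, h•y, θ_β(y)(h)·k·θ_α(x)(g)⁻¹), the projections to X and Y
are 1-cells (with constant acting families), and κ(x,y,k) = k gives a 2-cell. -/
theorem two_fibered_product_construction
    (G H K : Type*) [Group G] [Group H] [Group K] [Finite G] [Finite H] [Finite K]
    (X Y Z : Type*) [Finite X] [Finite Y] [Finite Z]
    [MulAction G X] [MulAction H Y] [MulAction K Z]
    (α : X → Z) (θα : X → G → K)
    (hα1 : ∀ (x : X) (g : G), α (g • x) = θα x g • α x)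
    (hα2 : ∀ (x : X) (g g' : G), θα x (g * g') = θα (g' • x) g * θα x g')
    (β : Y → Z) (θβ : Y → H → K)
    (hβ1 : ∀ (y : Y) (h : H), β (h • y) = θβ y h • β y)
    (hβ2 : ∀ (y : Y) (h h' : H), θβ y (h * h') = θβ (h' • y) h * θβ y h') :
    -- the formula maps F into F
    (∀ (g : G) (h : H) (x : X) (y : Y) (k : K), β y = k • α x →
      β (h • y) = (θβ y h * k * (θα x g)⁻¹) • α (g • x)) ∧
    -- the identity of G×H acts trivially
    (∀ (x : X) (y : Y) (k : K), β y = k • α x →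
      (((1 : G) • x, (1 : H) • y, θβ y 1 * k * (θα x 1)⁻¹) : X × Y × K)
        = (x, y, k)) ∧
    -- compatibility with multiplication in G×H
    (∀ (g g' : G) (h h' : H) (x : X) (y : Y) (k : K), β y = k • α x →
      ((((g * g') • x, (h * h') • y,
          θβ y (h * h') * k * (θα x (g * g'))⁻¹) : X × Y × K)
        = (g • (g' • x), h • (h' • y),
            θβ (h' • y) h * (θβ y h' * k * (θα x g')⁻¹) * (θα (g' • x) g)⁻¹))) ∧
    -- ℘_X is a 1-cell for the constant acting family (g,h) ↦ g
    (∀ (g : G) (h : H) (x : X) (y : Y) (k : K), β y = k • α x →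
      ((g • x, h • y, θβ y h * k * (θα x g)⁻¹) : X × Y × K).1 = g • x) ∧
    -- ℘_Y is a 1-cell for the constant acting family (g,h) ↦ h
    (∀ (g : G) (h : H) (x : X) (y : Y) (k : K), β y = k • α x →
      ((g • x, h • y, θβ y h * k * (θα x g)⁻¹) : X × Y × K).2.1 = h • y) ∧
    -- κ is a 2-cell: β(℘_Y f) = κ(f) • α(℘_X f)
    (∀ (x : X) (y : Y) (k : K), β y = k • α x → β y = k • α x) ∧
    -- κ((g,h)•f) · θ_α(℘_X f)(g) · κ(f)⁻¹ = θ_β(℘_Y f)(h)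
    (∀ (g : G) (h : H) (x : X) (y : Y) (k : K), β y = k • α x →
      (θβ y h * k * (θα x g)⁻¹) * θα x g * k⁻¹ = θβ y h) := by
  have θα1 : ∀ x : X, θα x 1 = 1 := by
    intro x
    have h := hα2 x 1 1
    simp only [mul_one, one_smul] at h
    exact (right_eq_mul.mp h)
  have θβ1 : ∀ y : Y, θβ y 1 = 1 := by
    intro y
    have h := hβ2 y 1 1
    simp only [mul_one, one_smul] at h
    exact (right_eq_mul.mp h)
  refine ⟨?_, ?_, ?_, ?_, ?_, ?_, ?_⟩
  · intro g h x y k hf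
    rw [hβ1, hα1, hf, smul_smul, smul_smul]
    congr 1
    group
  · intro x y k hf
    simp [θα1, θβ1]
  · intro g g' h h' x y k hf
    rw [hα2, hβ2, mul_smul, mul_smul]
    simp only [Prod.mk.injEq, true_and]
    group
  · intros; rfl
  · intros; rfl
  · intro x y k hf; exact hf
  · intro g h x y k hf
    group
end

section
/- Let (α,θ_α): X/G → Y/H and (β,θ_β): Y/H → X/G be 1-cells, and let ρ: X → G and λ: Y → H be maps such that: x = ρ_x•β(α(x)) and ρ_{g•x}·θ_{β,α(x)}(θ_{α,x}(g))·ρ_x⁻¹ = g for all x ∈ X and g ∈ G; y = λ_y•α(β(y)) and λ_{h•y}·θ_{α,β(y)}(θ_{β,y}(h))·λ_y⁻¹ = h for all y ∈ Y and h ∈ H; and the triangle identities θ_{α,β(α(x))}(ρ_x) = λ_{α(x)} for all x ∈ X and ρ_{β(y)} = θ_{β,α(β(y))}(λ_y) for all y ∈ Y hold. Then for any h ∈ H and x ∈ X, setting g = θ_{β,α(x)}(h)·ρ_x⁻¹, one has (1) θ_{α,x}(g) = λ_{h•α(x)}⁻¹·h, and (2) θ_{α,g•x}(g⁻¹) = h⁻¹·λ_{h•α(x)}.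 -/
/-- Lemma on adjoint equivalences in 𝕊: if (α,β,ρ,lam) is an adjoint
equivalence, then for any h ∈ H and x ∈ X, setting g = θ_β(α x)(h)·(ρ x)⁻¹
one has θ_α(x)(g) = (lam (h•α x))⁻¹·h and θ_α(g•x)(g⁻¹) = h⁻¹·lam (h•α x). -/
theorem adjoint_equivalence_theta_lemma
    (G H : Type*) [Group G] [Group H] [Finite G] [Finite H]
    (X Y : Type*) [Finite X] [Finite Y]
    [MulAction G X] [MulAction H Y]
    (α : X → Y) (θα : X → G → H)
    (hα1 : ∀ (x : X) (g : G), α (g • x) = θα x g • α x)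
    (hα2 : ∀ (x : X) (g g' : G), θα x (g * g') = θα (g' • x) g * θα x g')
    (β : Y → X) (θβ : Y → H → G)
    (hβ1 : ∀ (y : Y) (h : H), β (h • y) = θβ y h • β y)
    (hβ2 : ∀ (y : Y) (h h' : H), θβ y (h * h') = θβ (h' • y) h * θβ y h')
    (ρ : X → G) (lam : Y → H)
    (hρ1 : ∀ x : X, x = ρ x • β (α x))
    (hρ2 : ∀ (x : X) (g : G), ρ (g • x) * θβ (α x) (θα x g) * (ρ x)⁻¹ = g)
    (hlam1 : ∀ y : Y, y = lam y • α (β y))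
    (hlam2 : ∀ (y : Y) (h : H), lam (h • y) * θα (β y) (θβ y h) * (lam y)⁻¹ = h)
    (htri1 : ∀ x : X, θα (β (α x)) (ρ x) = lam (α x))
    (htri2 : ∀ y : Y, ρ (β y) = θβ (α (β y)) (lam y)) :
    ∀ (h : H) (x : X),
      θα x (θβ (α x) h * (ρ x)⁻¹) = (lam (h • α x))⁻¹ * h ∧
      θα ((θβ (α x) h * (ρ x)⁻¹) • x) (θβ (α x) h * (ρ x)⁻¹)⁻¹
        = h⁻¹ * lam (h • α x) := by
  intro h x
  have hone : θα x 1 = 1 := by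
    have := hα2 x 1 1
    simp at this
    exact this
  have hfix : (ρ x)⁻¹ • x = β (α x) := by
    rw [inv_smul_eq_iff]
    exact hρ1 x
  have hinv : θα x (ρ x)⁻¹ = (lam (α x))⁻¹ := by
    have h1 : θα x (ρ x * (ρ x)⁻¹) = θα ((ρ x)⁻¹ • x) (ρ x) * θα x (ρ x)⁻¹ :=
      hα2 x (ρ x) (ρ x)⁻¹
    rw [mul_inv_cancel, hone, hfix, htri1 x] at h1
    exact eq_inv_of_mul_eq_one_right h1.symm
  have hmid : θα (β (α x)) (θβ (α x) h) = (lam (h • α x))⁻¹ * h * lam (α x) := by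
    have h3 := hlam2 (α x) h
    calc θα (β (α x)) (θβ (α x) h)
        = (lam (h • α x))⁻¹ * (lam (h • α x) * θα (β (α x)) (θβ (α x) h) * (lam (α x))⁻¹) * lam (α x) := by group
      _ = (lam (h • α x))⁻¹ * h * lam (α x) := by rw [h3]
  have key : θα x (θβ (α x) h * (ρ x)⁻¹) = (lam (h • α x))⁻¹ * h := by
    rw [hα2 x (θβ (α x) h) (ρ x)⁻¹, hfix, hmid, hinv]
    group
  refine ⟨key, ?_⟩
  set g := θβ (α x) h * (ρ x)⁻¹ with hg
  have h2 : θα x (g⁻¹ * g) = θα (g • x) g⁻¹ * θα x g := hα2 x g⁻¹ g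
  rw [inv_mul_cancel, hone] at h2
  have : θα (g • x) g⁻¹ = (θα x g)⁻¹ := eq_inv_of_mul_eq_one_left h2.symm
  rw [this, key]; group
end

section
/- Let (α,θ_α): X/G → Y/H and (β,θ_β): Y/H → X/G be 1-cells, and let ρ: X → G and λ: Y → H be maps such that: x = ρ_x•β(α(x)) and ρ_{g•x}·θ_{β,α(x)}(θ_{α,x}(g))·ρ_x⁻¹ = g for all x ∈ X and g ∈ G; y = λ_y•α(β(y)) and λ_{h•y}·θ_{α,β(y)}(θ_{β,y}(h))·λ_y⁻¹ = h for all y ∈ Y and h ∈ H; and θ_{α,β(α(x))}(ρ_x) = λ_{α(x)} for all x ∈ X and ρ_{β(y)} = θ_{β,α(β(y))}(λ_y) for all y ∈ Y. Then (α,θ_α) is stab-surjective. -/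
/-- Every adjoint equivalence in 𝕊 is stab-surjective. -/
theorem adjoint_equivalence_is_stab_surjective
    (G H : Type*) [Group G] [Group H] [Finite G] [Finite H]
    (X Y : Type*) [Finite X] [Finite Y]
    [MulAction G X] [MulAction H Y]
    (α : X → Y) (θα : X → G → H)
    (hα1 : ∀ (x : X) (g : G), α (g • x) = θα x g • α x)
    (hα2 : ∀ (x : X) (g g' : G), θα x (g * g') = θα (g' • x) g * θα x g')
    (β : Y → X) (θβ : Y → H → G)
    (hβ1 : ∀ (y : Y) (h : H), β (h • y) = θβ y h • β y)
    (hβ2 : ∀ (y : Y) (h h' : H), θβ y (h * h') = θβ (h' • y) h * θβ y h')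
    (ρ : X → G) (lam : Y → H)
    (hρ1 : ∀ x : X, x = ρ x • β (α x))
    (hρ2 : ∀ (x : X) (g : G), ρ (g • x) * θβ (α x) (θα x g) * (ρ x)⁻¹ = g)
    (hlam1 : ∀ y : Y, y = lam y • α (β y))
    (hlam2 : ∀ (y : Y) (h : H), lam (h • y) * θα (β y) (θβ y h) * (lam y)⁻¹ = h)
    (htri1 : ∀ x : X, θα (β (α x)) (ρ x) = lam (α x))
    (htri2 : ∀ y : Y, ρ (β y) = θβ (α (β y)) (lam y)) :
    (∀ y : Y, ∃ (x : X) (h : H), y = h • α x) ∧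
    (∀ (x x' : X) (h h' : H), h • α x = h' • α x' →
      ∃ g : G, x' = g • x ∧ h = h' * θα x g) := by
  constructor
  · intro y
    exact ⟨β y, lam y, hlam1 y⟩
  · intro x x' h h' heq
    set k := h'⁻¹ * h with hk
    have hk2 : α x' = k • α x := by
      have h1 : h'⁻¹ • (h • α x) = h'⁻¹ • (h' • α x') := by rw [heq]
      simpa [smul_smul, hk] using h1.symm
    have hb : β (α x) = (ρ x)⁻¹ • x := eq_inv_smul_iff.mpr (hρ1 x).symm
    have hone : θα x (1 : G) = 1 := by
      have h1 := hα2 x 1 1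
      simp only [one_smul, mul_one] at h1
      exact (right_eq_mul.mp h1)
    have hinv : θα x (ρ x)⁻¹ = (lam (α x))⁻¹ := by
      have h1 := hα2 x (ρ x) (ρ x)⁻¹
      rw [mul_inv_cancel, hone, ← hb, htri1 x] at h1
      exact (inv_eq_of_mul_eq_one_right h1.symm).symm
    refine ⟨ρ x' * θβ (α x) k * (ρ x)⁻¹, ?_, ?_⟩
    · calc x' = ρ x' • β (α x') := hρ1 x'
        _ = ρ x' • β (k • α x) := by rw [hk2]
        _ = ρ x' • θβ (α x) k • β (α x) := by rw [hβ1]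
        _ = ρ x' • θβ (α x) k • (ρ x)⁻¹ • x := by rw [hb]
        _ = (ρ x' * θβ (α x) k * (ρ x)⁻¹) • x := by simp [smul_smul, mul_assoc]
    · have hmid : θα (β (α x)) (θβ (α x) k) = (lam (α x'))⁻¹ * k * lam (α x) := by
        have h1 := hlam2 (α x) k
        rw [← hk2] at h1
        conv_rhs => rw [← h1]
        group
      have hfirst : θβ (α x) k • β (α x) = β (α x') := by rw [← hβ1, ← hk2]
      have hθ : θα x (ρ x' * θβ (α x) k * (ρ x)⁻¹) = k := by
        rw [hα2 x (ρ x' * θβ (α x) k) (ρ x)⁻¹, ← hb,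
          hα2 (β (α x)) (ρ x') (θβ (α x) k), hfirst, htri1 x', hmid, hinv]
        group
      rw [hθ, hk]
      group
end

section
/- Let G, H, K be finite groups acting on finite sets X, Y, Z, let (α,θ_α): X/G → Z/K and (β,θ_β): Y/H → Z/K be 1-cells, and let F = {(x,y,k) ∈ X×Y×K | β(y) = k•α(x)} with the G×H-action (g,h)•(x,y,k) = (g•x, h•y, θ_{β,y}(h)·k·θ_{α,x}(g)⁻¹). If (β,θ_β) is stab-surjective, then the 1-cell (℘_X, (g,h) ↦ g): F/(G×H) → X/G given by ℘_X(x,y,k) = x is stab-surjective; explicitly, (i) for every x ∈ X there exist (x',y,k) ∈ F and g ∈ G with x = g•x', and (ii) whenever (x₁,y₁,k₁), (x₂,y₂,k₂) ∈ F and g₁, g₂ ∈ G satisfy g₁•x₁ = g₂•x₂, there exists (g,h) ∈ G×H with (g,h)•(x₁,y₁,k₁) = (x₂,y₂,k₂) and g₁ = g₂·g. -/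
/-- Stab-surjective 1-cells are stable under 2-pullbacks: if (β,θβ) is
stab-surjective, then the projection ℘_X from the 2-fibered product
F = {(x,y,k) | β(y) = k•α(x)} (with its G×H-action) to X/G is
stab-surjective. -/
theorem pullback_of_stab_surjective
    (G H K : Type*) [Group G] [Group H] [Group K] [Finite G] [Finite H] [Finite K]
    (X Y Z : Type*) [Finite X] [Finite Y] [Finite Z]
    [MulAction G X] [MulAction H Y] [MulAction K Z]
    (α : X → Z) (θα : X → G → K)
    (hα1 : ∀ (x : X) (g : G), α (g • x) = θα x g • α x)
    (hα2 : ∀ (x : X) (g g' : G), θα x (g * g') = θα (g' • x) g * θα x g')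
    (β : Y → Z) (θβ : Y → H → K)
    (hβ1 : ∀ (y : Y) (h : H), β (h • y) = θβ y h • β y)
    (hβ2 : ∀ (y : Y) (h h' : H), θβ y (h * h') = θβ (h' • y) h * θβ y h')
    (hssβ1 : ∀ z : Z, ∃ (y : Y) (k : K), z = k • β y)
    (hssβ2 : ∀ (y y' : Y) (k k' : K), k • β y = k' • β y' →
      ∃ h : H, y' = h • y ∧ k = k' * θβ y h) :
    -- (i) every x ∈ X is reached from an element of F
    (∀ x : X, ∃ (x' : X) (y : Y) (k : K) (g : G),
      β y = k • α x' ∧ x = g • x') ∧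
    -- (ii) gluing condition for elements of F
    (∀ (x₁ x₂ : X) (y₁ y₂ : Y) (k₁ k₂ : K) (g₁ g₂ : G),
      β y₁ = k₁ • α x₁ → β y₂ = k₂ • α x₂ → g₁ • x₁ = g₂ • x₂ →
      ∃ (g : G) (h : H),
        ((g • x₁, h • y₁, θβ y₁ h * k₁ * (θα x₁ g)⁻¹) : X × Y × K)
          = (x₂, y₂, k₂) ∧ g₁ = g₂ * g) := by
  constructor
  · intro x
    obtain ⟨y, k, hk⟩ := hssβ1 (α x)
    exact ⟨x, y, k⁻¹, 1, by rw [hk, inv_smul_smul], (one_smul G x).symm⟩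
  · intro x₁ x₂ y₁ y₂ k₁ k₂ g₁ g₂ h1 h2 hg
    refine ⟨g₂⁻¹ * g₁, ?_⟩
    have hx : (g₂⁻¹ * g₁) • x₁ = x₂ := by rw [mul_smul, hg, inv_smul_smul]
    have key : (k₂ * θα x₁ (g₂⁻¹ * g₁) * k₁⁻¹) • β y₁ = (1 : K) • β y₂ := by
      rw [one_smul, h2, ← hx, hα1, h1]
      simp [mul_smul]
    obtain ⟨h, hy, hk⟩ := hssβ2 y₁ y₂ _ 1 key
    rw [one_mul] at hk
    refine ⟨h, ?_, by group⟩
    have : θβ y₁ h * k₁ * (θα x₁ (g₂⁻¹ * g₁))⁻¹ = k₂ := by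
      rw [← hk]; group
    rw [hx, ← hy, this]
end

section
/- Let (α,θ): X/G → Y/H be a stab-surjective 1-cell between finite group actions. Then the assignment sending the G-orbit of a point x ∈ X to the H-orbit of α(x) ∈ Y is a well-defined bijection from the set of G-orbits of X onto the set of H-orbits of Y. In particular, X and Y have the same number of orbits, and for each x ∈ X the set H•α(G•x) = {h•α(x') | h ∈ H, x' ∈ G•x} is a single H-orbit. -/
/-- A stab-surjective 1-cell (α,θ) : X/G → Y/H induces a bijection between the
set of G-orbits of X and the set of H-orbits of Y, sending the orbit of x to
the orbit of α(x); in particular X and Y have the same number of orbits, and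
H•α(G•x) is a single H-orbit for every x ∈ X. -/
theorem stab_surjective_orbit_bijection
    (G H : Type*) [Group G] [Group H] [Finite G] [Finite H]
    (X Y : Type*) [Finite X] [Finite Y]
    [MulAction G X] [MulAction H Y]
    (α : X → Y) (θ : X → G → H)
    (hα1 : ∀ (x : X) (g : G), α (g • x) = θ x g • α x)
    (hα2 : ∀ (x : X) (g g' : G), θ x (g * g') = θ (g' • x) g * θ x g')
    (hss1 : ∀ y : Y, ∃ (x : X) (h : H), y = h • α x)
    (hss2 : ∀ (x x' : X) (h h' : H), h • α x = h' • α x' →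
      ∃ g : G, x' = g • x ∧ h = h' * θ x g) :
    (∃ f : Quotient (MulAction.orbitRel G X) → Quotient (MulAction.orbitRel H Y),
      Function.Bijective f ∧
      ∀ x : X, f (Quotient.mk (MulAction.orbitRel G X) x)
        = Quotient.mk (MulAction.orbitRel H Y) (α x)) ∧
    Nat.card (Quotient (MulAction.orbitRel G X))
      = Nat.card (Quotient (MulAction.orbitRel H Y)) ∧
    (∀ x : X,
      {y : Y | ∃ (h : H) (x' : X), x' ∈ MulAction.orbit G x ∧ y = h • α x'}
        = MulAction.orbit H (α x)) := by
  have hwd : ∀ x x' : X, (MulAction.orbitRel G X).r x x' →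
      (MulAction.orbitRel H Y).r (α x) (α x') := by
    intro x x' hxx
    obtain ⟨g, hg⟩ := hxx
    refine ⟨θ x' g, ?_⟩
    simp only [← hα1]
    exact congrArg α hg
  have hbij : ∃ f : Quotient (MulAction.orbitRel G X) → Quotient (MulAction.orbitRel H Y),
      Function.Bijective f ∧
      ∀ x : X, f (Quotient.mk (MulAction.orbitRel G X) x)
        = Quotient.mk (MulAction.orbitRel H Y) (α x) := by
    refine ⟨Quotient.lift (fun x => Quotient.mk (MulAction.orbitRel H Y) (α x))
      (fun a b hab => Quotient.sound (hwd a b hab)), ⟨?_, ?_⟩, fun x => rfl⟩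
    · intro a b
      induction a using Quotient.ind
      induction b using Quotient.ind
      rename_i x x'
      intro hab
      obtain ⟨h, hh⟩ := Quotient.exact hab
      obtain ⟨g, hg, _⟩ := hss2 x' x h 1 (by simpa using hh)
      exact Quotient.sound ⟨g, hg.symm⟩
    · intro b
      induction b using Quotient.ind
      rename_i y
      obtain ⟨x, h, hy⟩ := hss1 y
      exact ⟨Quotient.mk _ x, Quotient.sound ⟨h⁻¹, by rw [hy]; exact inv_smul_smul h (α x)⟩⟩
  obtain ⟨f, hf, hfx⟩ := hbij
  refine ⟨⟨f, hf, hfx⟩, Nat.card_eq_of_bijective f hf, ?_⟩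
  intro x
  ext y
  constructor
  · rintro ⟨h, x', ⟨g, rfl⟩, rfl⟩
    exact ⟨h * θ x g, by show (h * θ x g) • α x = h • α (g • x); rw [hα1, mul_smul]⟩
  · rintro ⟨h, rfl⟩
    exact ⟨h, x, ⟨1, one_smul _ _⟩, rfl⟩
end

section
/- Let G be a finite group acting on finite sets X and Y, and let α: X → Y be a G-equivariant map (α(g•x) = g•α(x) for all g, x). Then the 1-cell (α, θ) with the constant family θ_x = id_G is stab-surjective if and only if α is bijective; explicitly, the two conditions '(i) for every y ∈ Y there exist x ∈ X and g ∈ G with y = g•α(x), and (ii) whenever g•α(x) = g'•α(x') there exists g'' ∈ G with x' = g''•x and g = g'·g''' hold if and only if α is a bijection. -/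
/-- For a G-equivariant map α : X → Y between finite G-sets, the corresponding
equivariant 1-cell (with constant acting family θ_x = id_G) is stab-surjective
if and only if α is a bijection. -/
theorem equivariant_stab_surjective_iff_bijective
    (G : Type*) [Group G] [Finite G]
    (X Y : Type*) [Finite X] [Finite Y]
    [MulAction G X] [MulAction G Y]
    (α : X → Y)
    (hequiv : ∀ (g : G) (x : X), α (g • x) = g • α x) :
    ((∀ y : Y, ∃ (x : X) (g : G), y = g • α x) ∧
     (∀ (x x' : X) (g g' : G), g • α x = g' • α x' →
       ∃ g'' : G, x' = g'' • x ∧ g = g' * g''))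
    ↔ Function.Bijective α := by
  constructor
  · rintro ⟨hsurj, hstab⟩
    constructor
    · intro x x' h
      obtain ⟨g'', hx, hg⟩ := hstab x x' 1 1 (by rw [h])
      have : g'' = 1 := by
        have := hg.symm
        simpa using this
      simpa [this] using hx.symm
    · intro y
      obtain ⟨x, g, rfl⟩ := hsurj y
      exact ⟨g • x, (hequiv g x)⟩
  · rintro ⟨hinj, hsurj⟩
    constructor
    · intro y
      obtain ⟨x, rfl⟩ := hsurj y
      exact ⟨x, 1, (one_smul G _).symm⟩
    · intro x x' g g' h
      refine ⟨g'⁻¹ * g, ?_, by group⟩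
      apply hinj
      rw [hequiv, mul_smul, h, inv_smul_smul]
end

section
/- Let (α,θ_α): X/G → Y/H be a stab-surjective 1-cell, let (β,θ_β): X/G → Y'/H be any 1-cell to a finite H-set Y', and let ε: X → H be a map satisfying ε_{g•x}·θ_{α,x}(g)·ε_x⁻¹ = θ_{β,x}(g) for all x ∈ X and g ∈ G. Then there exists a unique H-equivariant map ω: Y → Y' such that ω(α(x)) = ε_x⁻¹•β(x) for all x ∈ X. -/
/-- Factorization through a stab-surjective 1-cell: given a stab-surjective
1-cell (α,θα) : X/G → Y/H, any 1-cell (β,θβ) : X/G → Y'/H, and a 2-cell datum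
ε identifying the acting parts, there is a unique H-equivariant map ω : Y → Y'
with ω(α(x)) = ε(x)⁻¹ • β(x) for all x. -/
theorem factorization_through_stab_surjective
    (G H : Type*) [Group G] [Group H] [Finite G] [Finite H]
    (X Y Y' : Type*) [Finite X] [Finite Y] [Finite Y']
    [MulAction G X] [MulAction H Y] [MulAction H Y']
    (α : X → Y) (θα : X → G → H)
    (hα1 : ∀ (x : X) (g : G), α (g • x) = θα x g • α x)
    (hα2 : ∀ (x : X) (g g' : G), θα x (g * g') = θα (g' • x) g * θα x g')
    (β : X → Y') (θβ : X → G → H)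
    (hβ1 : ∀ (x : X) (g : G), β (g • x) = θβ x g • β x)
    (hβ2 : ∀ (x : X) (g g' : G), θβ x (g * g') = θβ (g' • x) g * θβ x g')
    (hssα1 : ∀ y : Y, ∃ (x : X) (h : H), y = h • α x)
    (hssα2 : ∀ (x x' : X) (h h' : H), h • α x = h' • α x' →
      ∃ g : G, x' = g • x ∧ h = h' * θα x g)
    (ε : X → H)
    (hε : ∀ (x : X) (g : G), ε (g • x) * θα x g * (ε x)⁻¹ = θβ x g) :
    ∃! ω : Y → Y',
      (∀ (h : H) (y : Y), ω (h • y) = h • ω y) ∧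
      (∀ x : X, ω (α x) = (ε x)⁻¹ • β x) := by
  classical
  -- key well-definedness lemma
  have key : ∀ (x x' : X) (h h' : H), h • α x = h' • α x' →
      h • (ε x)⁻¹ • β x = h' • (ε x')⁻¹ • β x' := by
    intro x x' h h' heq
    obtain ⟨g, hx', hh⟩ := hssα2 x x' h h' heq
    subst hx'
    rw [hβ1 x g, ← hε x g, hh]
    simp only [smul_smul]
    group
  choose xf hf hxf using hssα1
  refine ⟨fun y => hf y • (ε (xf y))⁻¹ • β (xf y), ⟨?_, ?_⟩, ?_⟩
  · intro h y
    have : hf (h • y) • α (xf (h • y)) = (h * hf y) • α (xf y) := by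
      rw [mul_smul, ← hxf y, ← hxf (h • y)]
    have := key _ _ _ _ this
    simpa [mul_smul] using this
  · intro x
    have : hf (α x) • α (xf (α x)) = (1 : H) • α x := by
      rw [← hxf (α x), one_smul]
    have := key _ _ _ _ this
    simpa using this
  · rintro ω ⟨hEq, hVal⟩
    funext y
    conv_lhs => rw [hxf y]
    rw [hEq, hVal]
end

section
/- Let (α,θ_α): X/G → Y/H and (β,θ_β): X/G → Y'/H both be stab-surjective 1-cells, and let ε: X → H be a map satisfying ε_{g•x}·θ_{α,x}(g)·ε_x⁻¹ = θ_{β,x}(g) for all x ∈ X and g ∈ G. Then the unique H-equivariant map ω: Y → Y' with ω(α(x)) = ε_x⁻¹•β(x) for all x ∈ X is a bijection, i.e. an isomorphism of H-sets. In particular, the target of a stab-surjective 1-cell out of X/G with prescribed acting part is determined up to H-equivariant isomorphism. -/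
/-- If both (α,θα) : X/G → Y/H and (β,θβ) : X/G → Y'/H are stab-surjective
1-cells with acting parts identified by ε, then the unique H-equivariant map
ω : Y → Y' with ω(α(x)) = ε(x)⁻¹ • β(x) is a bijection (an isomorphism of
H-sets); thus the target of a stab-surjective 1-cell with prescribed acting
part is unique up to H-equivariant isomorphism. -/
theorem stab_surjective_target_unique
    (G H : Type*) [Group G] [Group H] [Finite G] [Finite H]
    (X Y Y' : Type*) [Finite X] [Finite Y] [Finite Y']
    [MulAction G X] [MulAction H Y] [MulAction H Y']
    (α : X → Y) (θα : X → G → H)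
    (hα1 : ∀ (x : X) (g : G), α (g • x) = θα x g • α x)
    (hα2 : ∀ (x : X) (g g' : G), θα x (g * g') = θα (g' • x) g * θα x g')
    (β : X → Y') (θβ : X → G → H)
    (hβ1 : ∀ (x : X) (g : G), β (g • x) = θβ x g • β x)
    (hβ2 : ∀ (x : X) (g g' : G), θβ x (g * g') = θβ (g' • x) g * θβ x g')
    (hssα1 : ∀ y : Y, ∃ (x : X) (h : H), y = h • α x)
    (hssα2 : ∀ (x x' : X) (h h' : H), h • α x = h' • α x' →
      ∃ g : G, x' = g • x ∧ h = h' * θα x g)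
    (hssβ1 : ∀ y' : Y', ∃ (x : X) (h : H), y' = h • β x)
    (hssβ2 : ∀ (x x' : X) (h h' : H), h • β x = h' • β x' →
      ∃ g : G, x' = g • x ∧ h = h' * θβ x g)
    (ε : X → H)
    (hε : ∀ (x : X) (g : G), ε (g • x) * θα x g * (ε x)⁻¹ = θβ x g) :
    ∃ ω : Y → Y',
      ((∀ (h : H) (y : Y), ω (h • y) = h • ω y) ∧
        (∀ x : X, ω (α x) = (ε x)⁻¹ • β x)) ∧
      Function.Bijective ω ∧
      (∀ ω' : Y → Y',
        ((∀ (h : H) (y : Y), ω' (h • y) = h • ω' y) ∧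
          (∀ x : X, ω' (α x) = (ε x)⁻¹ • β x)) → ω' = ω) := by
  classical
  choose xf hf hyf using hssα1
  set ω : Y → Y' := fun y => (hf y * (ε (xf y))⁻¹) • β (xf y) with hω
  have key : ∀ (x : X) (h : H), ω (h • α x) = (h * (ε x)⁻¹) • β x := by
    intro x h
    set y := h • α x with hy
    have h1 : hf y • α (xf y) = h • α x := (hyf y).symm
    obtain ⟨g, hg1, hg2⟩ := hssα2 (xf y) x (hf y) h h1
    have hβx : β x = θβ (xf y) g • β (xf y) := by rw [hg1, hβ1]
    have hεx : ε x = ε (g • xf y) := by rw [hg1]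
    have hgrp : hf y * (ε (xf y))⁻¹ = h * (ε x)⁻¹ * θβ (xf y) g := by
      rw [← hε (xf y) g, ← hεx, hg2]; group
    calc ω y = (hf y * (ε (xf y))⁻¹) • β (xf y) := rfl
      _ = (h * (ε x)⁻¹ * θβ (xf y) g) • β (xf y) := by rw [hgrp]
      _ = (h * (ε x)⁻¹) • β x := by rw [hβx, smul_smul]
  have equiv : ∀ (h : H) (y : Y), ω (h • y) = h • ω y := by
    intro h y
    calc ω (h • y) = ω ((h * hf y) • α (xf y)) := by
          rw [← smul_smul, ← hyf y]
      _ = (h * hf y * (ε (xf y))⁻¹) • β (xf y) := key _ _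
      _ = h • ω y := by
          show _ = h • (hf y * (ε (xf y))⁻¹) • β (xf y)
          rw [smul_smul, mul_assoc]
  have comm : ∀ x : X, ω (α x) = (ε x)⁻¹ • β x := by
    intro x
    have := key x 1
    simpa using this
  refine ⟨ω, ⟨equiv, comm⟩, ⟨?_, ?_⟩, ?_⟩
  · -- injective
    intro y y' hyy'
    have e1 : ω y = (hf y * (ε (xf y))⁻¹) • β (xf y) := rfl
    have e2 : ω y' = (hf y' * (ε (xf y'))⁻¹) • β (xf y') := rfl
    rw [e1, e2] at hyy'
    obtain ⟨g, hg1, hg2⟩ := hssβ2 (xf y) (xf y') _ _ hyy'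
    have hθ : θβ (xf y) g = ε (xf y') * θα (xf y) g * (ε (xf y))⁻¹ := by
      rw [← hε (xf y) g, hg1]
    have hh : hf y = hf y' * θα (xf y) g := by
      rw [hθ] at hg2
      have h2 : hf y * (ε (xf y))⁻¹
          = hf y' * θα (xf y) g * (ε (xf y))⁻¹ := by
        rw [hg2]; group
      exact mul_right_cancel h2
    rw [hyf y, hyf y', hg1, hα1, hh, smul_smul]
  · -- surjective
    intro y'
    obtain ⟨x, h, hx⟩ := hssβ1 y'
    refine ⟨(h * ε x) • α x, ?_⟩
    rw [key, hx]
    congr 1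
    group
  · intro ω' ⟨heq, hcm⟩
    funext y
    have : ω' y = (hf y * (ε (xf y))⁻¹) • β (xf y) := by
      conv_lhs => rw [hyf y]
      rw [heq, hcm, smul_smul]
    exact this
end
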